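/- If 0 is a vertex of a polyhedron, the polyhedron can be mapped into the nonnegative orthant by a linear isomorphism: let P = {x ∈ ℝ^d : ∀ i ∈ Fin m, ⟪a i, x⟫ ≤ b i} with a : Fin m → ℝ^d, b : Fin m → ℝ, and suppose 0 is an extreme point of P. Then there exists a linear equivalence L : ℝ^d ≃ₗ[ℝ] ℝ^d such that for every x ∈ P and every coordinate j, 0 ≤ (L x) j. (This is the step ρ∘τ in the paper's construction of the projective closure: among the constraints active at the vertex one can choose a dual basis, and the corresponding linear transformation maps P into the positive orthant.) -/

import Mathlib

open scoped RealInnerProductSpace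

/-- If `0` is a vertex of the polyhedron `P`, then some linear
isomorphism of `ℝ^d` maps `P` into the nonnegative orthant. -/
theorem stmt_4 {d m : ℕ} (a : Fin m → EuclideanSpace ℝ (Fin d)) (b : Fin m → ℝ)
    (P : Set (EuclideanSpace ℝ (Fin d)))
    (hP : P = {x : EuclideanSpace ℝ (Fin d) | ∀ i : Fin m, ⟪a i, x⟫ ≤ b i})
    (h0 : (0 : EuclideanSpace ℝ (Fin d)) ∈ Set.extremePoints ℝ P) :
    ∃ L : EuclideanSpace ℝ (Fin d) ≃ₗ[ℝ] EuclideanSpace ℝ (Fin d),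
      ∀ x ∈ P, ∀ j : Fin d, 0 ≤ L x j := by
  rw [mem_extremePoints] at h0
  obtain ⟨h0P, hext⟩ := h0
  have hb : ∀ i, 0 ≤ b i := by
    intro i
    have := (hP ▸ h0P) i
    simpa using this
  set S : Set (EuclideanSpace ℝ (Fin d)) := {v | ∃ i, b i = 0 ∧ a i = v} with hS
  -- S spans
  have hspan : Submodule.span ℝ S = ⊤ := by
    by_contra hne
    rw [← Submodule.orthogonal_eq_bot_iff] at hne
    obtain ⟨v, hv, hv0⟩ := Submodule.exists_mem_ne_zero_of_ne_bot hne
    have hvS : ∀ i, b i = 0 → ⟪a i, v⟫ = 0 := by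
      intro i hi
      exact (Submodule.mem_orthogonal _ v).mp hv _ (Submodule.subset_span ⟨i, hi, rfl⟩)
    set f : Fin m → ℝ := fun i => if b i = 0 then 1 else b i / (|⟪a i, v⟫| + 1) with hf
    set F : Finset ℝ := insert 1 (Finset.image f Finset.univ) with hF
    have hFne : F.Nonempty := ⟨1, Finset.mem_insert_self _ _⟩
    have hFpos : ∀ y ∈ F, 0 < y := by
      intro y hy
      rw [hF] at hy
      rcases Finset.mem_insert.mp hy with h | h
      · rw [h]; norm_num
      · obtain ⟨i, _, hi⟩ := Finset.mem_image.mp h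
        rw [← hi, hf]
        by_cases hbi : b i = 0
        · simp [hbi]
        · simp only [hbi, if_false]
          have : 0 < b i := lt_of_le_of_ne (hb i) (Ne.symm hbi)
          positivity
    set ε : ℝ := F.min' hFne with hε
    have hεpos : 0 < ε := hFpos _ (Finset.min'_mem F hFne)
    have hεle : ∀ i, ε ≤ f i := fun i =>
      Finset.min'_le _ _ (Finset.mem_insert_of_mem (Finset.mem_image_of_mem f (Finset.mem_univ i)))
    have key : ∀ i, ∀ t : ℝ, |t| ≤ ε → ⟪a i, t • v⟫ ≤ b i := by
      intro i t ht
      rw [real_inner_smul_right]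
      by_cases hbi : b i = 0
      · rw [hvS i hbi, hbi]; simp
      · have hbpos : 0 < b i := lt_of_le_of_ne (hb i) (Ne.symm hbi)
        have hfi : f i = b i / (|⟪a i, v⟫| + 1) := by rw [hf]; simp [hbi]
        have h1 : t * ⟪a i, v⟫ ≤ |t| * |⟪a i, v⟫| := by
          calc t * ⟪a i, v⟫ ≤ |t * ⟪a i, v⟫| := le_abs_self _
          _ = |t| * |⟪a i, v⟫| := abs_mul _ _
        have h2 : ε ≤ b i / (|⟪a i, v⟫| + 1) := hfi ▸ hεle i
        have h3 : (0:ℝ) < |⟪a i, v⟫| + 1 := by positivity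
        have h4 : ε * (|⟪a i, v⟫| + 1) ≤ b i := by
          rw [← le_div_iff₀ h3]; exact h2
        nlinarith [abs_nonneg (⟪a i, v⟫), abs_nonneg t, hεpos]
    have hp1 : ε • v ∈ P := by
      rw [hP]; intro i; exact key i ε (by rw [abs_of_pos hεpos])
    have hp2 : -(ε • v) ∈ P := by
      rw [hP]; intro i
      have := key i (-ε) (by rw [abs_neg, abs_of_pos hεpos])
      rwa [neg_smul] at this
    have hseg : (0 : EuclideanSpace ℝ (Fin d)) ∈ openSegment ℝ (ε • v) (-(ε • v)) := by
      refine ⟨1/2, 1/2, by norm_num, by norm_num, by norm_num, ?_⟩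
      module
    have := (hext _ hp1 _ hp2 hseg).1
    exact hv0 (by simpa [smul_eq_zero, ne_of_gt hεpos] using this)
  -- extract a basis from S
  obtain ⟨t, hts, htspan, htli⟩ := exists_linearIndependent ℝ S
  rw [hspan] at htspan
  have B : Module.Basis t ℝ (EuclideanSpace ℝ (Fin d)) :=
    Module.Basis.mk htli (by rw [Subtype.range_coe, htspan])
  haveI : Fintype t := FiniteDimensional.fintypeBasisIndex B
  have hcard : Fintype.card t = d := by
    have h1 := Module.finrank_eq_card_basis B
    rw [finrank_euclideanSpace, Fintype.card_fin] at h1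
    omega
  have e : t ≃ Fin d := Fintype.equivFinOfCardEq hcard
  set c : Fin d → EuclideanSpace ℝ (Fin d) := fun j => ((e.symm j : t) : EuclideanSpace ℝ (Fin d))
    with hc
  have hcS : ∀ j, c j ∈ S := fun j => hts (e.symm j).2
  -- the linear map
  set T : EuclideanSpace ℝ (Fin d) →ₗ[ℝ] EuclideanSpace ℝ (Fin d) :=
    (WithLp.linearEquiv 2 ℝ (Fin d → ℝ)).symm.toLinearMap.comp
      (LinearMap.pi (fun j => -((innerSL ℝ (c j)).toLinearMap))) with hT
  have hTapp : ∀ x : EuclideanSpace ℝ (Fin d), ∀ j, T x j = -⟪c j, x⟫ := by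
    intro x j
    simp [hT]
  have hinj : Function.Injective T := by
    rw [← LinearMap.ker_eq_bot, Submodule.eq_bot_iff]
    intro x hx
    have hx0 : ∀ j, ⟪c j, x⟫ = 0 := by
      intro j
      have : T x j = 0 := by rw [LinearMap.mem_ker] at hx; rw [hx]; rfl
      rw [hTapp] at this; linarith
    have hxt : ∀ u : EuclideanSpace ℝ (Fin d), u ∈ t → ⟪u, x⟫ = 0 := by
      intro u hu
      have h := hx0 (e ⟨u, hu⟩)
      rw [hc] at h
      simpa using h
    have hmem : x ∈ (Submodule.span ℝ t)ᗮ := by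
      rw [Submodule.mem_orthogonal]
      intro u hu
      refine Submodule.span_induction hxt ?_ ?_ ?_ hu
      · simp
      · intro y z _ _ hy hz; rw [inner_add_left, hy, hz]; ring
      · intro r y _ hy; rw [inner_smul_left, hy]; simp
    rw [htspan, Submodule.top_orthogonal_eq_bot] at hmem
    simpa using hmem
  have hbij : Function.Bijective T :=
    ⟨hinj, (LinearMap.injective_iff_surjective).mp hinj⟩
  refine ⟨LinearEquiv.ofBijective T hbij, ?_⟩
  intro x hx j
  have heq : (LinearEquiv.ofBijective T hbij) x j = -⟪c j, x⟫ := hTapp x j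
  rw [heq]
  obtain ⟨i, hbi, hai⟩ := hcS j
  have hxi := (hP ▸ hx) i
  rw [hai, hbi] at hxi
  linarith
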